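/- Let λ ∈ Z_{≥0}^n be a composition and let d ≥ 1 be an integer. There exists a serpentine μ ∈ Ser^n_{d,λ} with μ₊ = (λ,d)₊ if and only if λ_i = 0 for some i ≤ n; moreover, when such μ exists, it is unique. -/

import Mathlib

/-- A composition of length `nn` is encoded as a function `ℕ → ℕ` vanishing from
index `nn` on (0-based indexing).  `IsSerpentine nn d lam mu` says that
`mu ∈ Ser^nn_{d,lam}` is a `d`-serpentine associated with `lam`. -/
def IsSerpentine (nn d : ℕ) (lam mu : ℕ → ℕ) : Prop :=
  (∀ i, nn ≤ i → lam i = 0) ∧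
  (∀ i, nn ≤ i → mu i = 0) ∧
  (∀ i, lam i ≤ mu i) ∧
  (∑ i ∈ Finset.range nn, (mu i - lam i)) = d ∧
  (∀ i j, i < j → j < nn → lam i ≤ lam j → mu i ≤ lam j) ∧
  (∀ i j, i < j → j < nn → lam j < lam i → lam i ≤ mu j → mu i = lam i)

/-- `domSum f s` is the sum of the `s` largest entries of a (finitely supported)
function `f : ℕ → ℕ`, i.e. the `s`-th partial sum of the dominant part `f₊`. -/
noncomputable def domSum (f : ℕ → ℕ) (s : ℕ) : ℕ :=
  sSup ((fun T : Finset ℕ => ∑ i ∈ T, f i) '' {T : Finset ℕ | T.card ≤ s})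

/-- `f₊ = g₊`: the dominant parts (non-increasing reorderings, padded by trailing
zeros) of the finitely supported functions `f` and `g` coincide. -/
def DomEq (f g : ℕ → ℕ) : Prop := ∀ s, domSum f s = domSum g s

/-- `f₊ ≤ g₊` in the dominance order: `|f| = |g|` and every partial sum of the
dominant part of `g` is at least the corresponding one for `f`. -/
def DomLE (f g : ℕ → ℕ) : Prop :=
  (∀ s, domSum f s ≤ domSum g s) ∧ ∃ N, ∀ s, N ≤ s → domSum f s = domSum g s

/-- The composition `(λ, d)`: append the entry `d` to a length-`n` composition. -/
def appendComp (n : ℕ) (lam : ℕ → ℕ) (d : ℕ) : ℕ → ℕ :=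
  fun i => if i < n then lam i else if i = n then d else 0

/-- The composition `(d₁, …, d_m)`: truncate `d` to its first `m` entries. -/
def truncComp (m : ℕ) (d : ℕ → ℕ) : ℕ → ℕ := fun i => if i < m then d i else 0

/-- A chain of iterated serpentines `μ⁽⁰⁾ = (0)`, `μ⁽ʲ⁾ ∈ Ser^{n_j}_{d_j, μ⁽ʲ⁻¹⁾}`. -/
def SerpChain (n : ℕ → ℕ) (m : ℕ) (d : ℕ → ℕ) (μ : ℕ → ℕ → ℕ) : Prop :=
  (∀ i, μ 0 i = 0) ∧ ∀ j, j < m → IsSerpentine (n j) (d j) (μ j) (μ (j + 1))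

/-- `d̄ ∈ Z_{≥0}^m` is `n̄`-admissible: for each `s < m` the number of nonzero
entries among `d_0, …, d_s` is at most `n_s`. -/
def NAdmissible (n : ℕ → ℕ) (m : ℕ) (d : ℕ → ℕ) : Prop :=
  ∀ s, s < m → ((Finset.range (s + 1)).filter (fun j => d j ≠ 0)).card ≤ n s


open Finset

lemma serp_sum_inter_range {f : ℕ → ℕ} {N : ℕ} (hf : ∀ i, N ≤ i → f i = 0)
    (T : Finset ℕ) : ∑ i ∈ T ∩ range N, f i = ∑ i ∈ T, f i := by
  apply Finset.sum_subset Finset.inter_subset_left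
  intro x hx hx'
  apply hf
  by_contra h
  push_neg at h
  exact hx' (Finset.mem_inter.2 ⟨hx, Finset.mem_range.2 h⟩)

lemma serp_domSet_nonempty (f : ℕ → ℕ) (s : ℕ) :
    ((fun T : Finset ℕ => ∑ i ∈ T, f i) '' {T : Finset ℕ | T.card ≤ s}).Nonempty :=
  ⟨0, ⟨∅, by simp, by simp⟩⟩

lemma serp_domSet_bdd {f : ℕ → ℕ} {N : ℕ} (hf : ∀ i, N ≤ i → f i = 0) (s : ℕ) :
    BddAbove ((fun T : Finset ℕ => ∑ i ∈ T, f i) '' {T : Finset ℕ | T.card ≤ s}) := by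
  refine ⟨∑ i ∈ range N, f i, ?_⟩
  rintro x ⟨T, _, rfl⟩
  show (∑ i ∈ T, f i) ≤ ∑ i ∈ range N, f i
  calc (∑ i ∈ T, f i) = ∑ i ∈ T ∩ range N, f i := (serp_sum_inter_range hf T).symm
    _ ≤ ∑ i ∈ range N, f i := Finset.sum_le_sum_of_subset Finset.inter_subset_right

lemma serp_le_domSum {f : ℕ → ℕ} {N : ℕ} (hf : ∀ i, N ≤ i → f i = 0) {s : ℕ}
    {T : Finset ℕ} (hT : T.card ≤ s) : ∑ i ∈ T, f i ≤ domSum f s :=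
  le_csSup (serp_domSet_bdd hf s) ⟨T, hT, rfl⟩

lemma serp_domSum_le {f : ℕ → ℕ} {s a : ℕ}
    (h : ∀ T : Finset ℕ, T.card ≤ s → ∑ i ∈ T, f i ≤ a) : domSum f s ≤ a := by
  apply csSup_le (serp_domSet_nonempty f s)
  rintro x ⟨T, hT, rfl⟩
  exact h T hT

lemma serp_domSum_spec {f : ℕ → ℕ} {N : ℕ} (hf : ∀ i, N ≤ i → f i = 0) (s : ℕ) :
    ∃ T : Finset ℕ, T.card ≤ s ∧ ∑ i ∈ T, f i = domSum f s := by
  have := Nat.sSup_mem (serp_domSet_nonempty f s) (serp_domSet_bdd hf s)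
  obtain ⟨T, hT, hsum⟩ := this
  exact ⟨T, hT, hsum⟩

lemma serp_domSum_comp (σ : Equiv.Perm ℕ) (f : ℕ → ℕ) (s : ℕ) :
    domSum (fun i => f (σ i)) s = domSum f s := by
  unfold domSum
  congr 1
  ext x
  constructor
  · rintro ⟨T, hT, rfl⟩
    refine ⟨T.image σ, ?_, ?_⟩
    · simpa [Finset.card_image_of_injective _ σ.injective] using hT
    · exact Finset.sum_image (fun a _ b _ h => σ.injective h)
  · rintro ⟨T, hT, rfl⟩
    refine ⟨T.image σ.symm, ?_, ?_⟩
    · simpa [Finset.card_image_of_injective _ σ.symm.injective] using hT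
    · show (∑ i ∈ Finset.image (⇑σ.symm) T, f (σ i)) = ∑ i ∈ T, f i
      rw [Finset.sum_image (fun a _ b _ h => σ.symm.injective h)]
      simp

noncomputable def serpCyc (T : Finset ℕ) (hT : T.Nonempty) : Equiv.Perm ℕ where
  toFun x := if hx : x ∈ T then
      (if h : (T.filter (fun y => x < y)).Nonempty
        then (T.filter (fun y => x < y)).min' h else T.min' hT)
    else x
  invFun x := if hx : x ∈ T then
      (if h : (T.filter (fun y => y < x)).Nonempty
        then (T.filter (fun y => y < x)).max' h else T.max' hT)
    else x
  left_inv := by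
    intro x
    beta_reduce
    by_cases hx : x ∈ T
    · rw [dif_pos hx]
      by_cases h : (T.filter (fun y => x < y)).Nonempty
      · rw [dif_pos h]
        set y := (T.filter (fun y => x < y)).min' h with hy
        have hyF : y ∈ T.filter (fun y => x < y) := Finset.min'_mem _ h
        have hyT : y ∈ T := (Finset.mem_filter.1 hyF).1
        have hxy : x < y := (Finset.mem_filter.1 hyF).2
        rw [dif_pos hyT]
        have hG : (T.filter (fun z => z < y)).Nonempty :=
          ⟨x, Finset.mem_filter.2 ⟨hx, hxy⟩⟩
        rw [dif_pos hG]
        apply le_antisymm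
        · apply Finset.max'_le
          intro z hz
          obtain ⟨hzT, hzy⟩ := Finset.mem_filter.1 hz
          by_contra hzx
          push_neg at hzx
          have : z ∈ T.filter (fun y => x < y) := Finset.mem_filter.2 ⟨hzT, hzx⟩
          exact absurd (Finset.min'_le (T.filter (fun y => x < y)) z this) (by omega)
        · exact Finset.le_max' (T.filter (fun z => z < y)) x (Finset.mem_filter.2 ⟨hx, hxy⟩)
      · rw [dif_neg h]
        have hmT : T.min' hT ∈ T := Finset.min'_mem _ _
        rw [dif_pos hmT]
        have hG : ¬ (T.filter (fun z => z < T.min' hT)).Nonempty := by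
          rintro ⟨z, hz⟩
          obtain ⟨hzT, hzm⟩ := Finset.mem_filter.1 hz
          exact absurd (Finset.min'_le T z hzT) (by omega)
        rw [dif_neg hG]
        apply le_antisymm
        · apply Finset.max'_le
          intro z hzT
          by_contra hzx
          push_neg at hzx
          exact h ⟨z, Finset.mem_filter.2 ⟨hzT, hzx⟩⟩
        · exact Finset.le_max' _ x hx
    · rw [dif_neg hx, dif_neg hx]
  right_inv := by
    intro x
    beta_reduce
    by_cases hx : x ∈ T
    · rw [dif_pos hx]
      by_cases h : (T.filter (fun y => y < x)).Nonempty
      · rw [dif_pos h]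
        set y := (T.filter (fun y => y < x)).max' h with hy
        have hyF : y ∈ T.filter (fun y => y < x) := Finset.max'_mem _ h
        have hyT : y ∈ T := (Finset.mem_filter.1 hyF).1
        have hxy : y < x := (Finset.mem_filter.1 hyF).2
        rw [dif_pos hyT]
        have hG : (T.filter (fun z => y < z)).Nonempty :=
          ⟨x, Finset.mem_filter.2 ⟨hx, hxy⟩⟩
        rw [dif_pos hG]
        apply le_antisymm
        · apply Finset.min'_le
          exact Finset.mem_filter.2 ⟨hx, hxy⟩
        · apply Finset.le_min'
          intro z hz
          obtain ⟨hzT, hzy⟩ := Finset.mem_filter.1 hz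
          by_contra hzx
          push_neg at hzx
          have : z ∈ T.filter (fun y => y < x) := Finset.mem_filter.2 ⟨hzT, by omega⟩
          exact absurd (Finset.le_max' (T.filter (fun y => y < x)) z this) (by omega)
      · rw [dif_neg h]
        have hmT : T.max' hT ∈ T := Finset.max'_mem _ _
        rw [dif_pos hmT]
        have hG : ¬ (T.filter (fun z => T.max' hT < z)).Nonempty := by
          rintro ⟨z, hz⟩
          obtain ⟨hzT, hzm⟩ := Finset.mem_filter.1 hz
          exact absurd (Finset.le_max' T z hzT) (by omega)
        rw [dif_neg hG]
        apply le_antisymm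
        · exact Finset.min'_le _ x hx
        · apply Finset.le_min'
          intro z hzT
          by_contra hzx
          push_neg at hzx
          exact h ⟨z, Finset.mem_filter.2 ⟨hzT, hzx⟩⟩
    · rw [dif_neg hx, dif_neg hx]

lemma serpCyc_apply_of_not_mem {T : Finset ℕ} (hT : T.Nonempty) {x : ℕ} (hx : x ∉ T) :
    serpCyc T hT x = x := dif_neg hx

lemma serpCyc_apply_of_next {T : Finset ℕ} (hT : T.Nonempty) {x : ℕ} (hx : x ∈ T)
    (h : (T.filter (fun y => x < y)).Nonempty) :
    serpCyc T hT x = (T.filter (fun y => x < y)).min' h := by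
  show dite _ _ _ = _
  rw [dif_pos hx, dif_pos h]

lemma serpCyc_apply_of_max {T : Finset ℕ} (hT : T.Nonempty) {x : ℕ} (hx : x ∈ T)
    (h : ¬ (T.filter (fun y => x < y)).Nonempty) :
    serpCyc T hT x = T.min' hT := by
  show dite _ _ _ = _
  rw [dif_pos hx, dif_neg h]

lemma serp_delta {f : ℕ → ℕ} {N : ℕ} (hf : ∀ i, N ≤ i → f i = 0) {v : ℕ} (hv : 1 ≤ v) (s : ℕ) :
    domSum f s + v ≤ domSum f (s + 1) ↔ s < ((range N).filter (fun i => v ≤ f i)).card := by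
  constructor
  · intro hle
    by_contra hcard
    push_neg at hcard
    have hub : domSum f (s + 1) ≤ domSum f s + (v - 1) := by
      apply serp_domSum_le
      intro T hT
      rw [← serp_sum_inter_range hf T]
      set T' := T ∩ range N with hT'
      have hT'card : T'.card ≤ s + 1 := le_trans (Finset.card_le_card Finset.inter_subset_left) hT
      by_cases hc : T'.card ≤ s
      · have := serp_le_domSum hf hc (T := T')
        omega
      · have hex : ∃ i ∈ T', i ∉ (range N).filter (fun i => v ≤ f i) := by
          by_contra hall
          push_neg at hall
          have : T' ⊆ (range N).filter (fun i => v ≤ f i) := fun i hi => hall i hi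
          have := Finset.card_le_card this
          omega
        obtain ⟨i, hiT, hif⟩ := hex
        have hiN : i ∈ range N := Finset.mem_inter.1 hiT |>.2
        have hfi : f i ≤ v - 1 := by
          by_contra hh
          push_neg at hh
          exact hif (Finset.mem_filter.2 ⟨hiN, by omega⟩)
        have hsum : ∑ j ∈ T'.erase i, f j + f i = ∑ j ∈ T', f j := Finset.sum_erase_add _ _ hiT
        have hce : (T'.erase i).card ≤ s := by
          have := Finset.card_erase_of_mem hiT
          omega
        have := serp_le_domSum hf hce (T := T'.erase i)
        omega
    omega
  · intro hcard
    obtain ⟨T, hT, hsum⟩ := serp_domSum_spec hf s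
    have hex : ∃ i ∈ (range N).filter (fun i => v ≤ f i), i ∉ T := by
      by_contra hall
      push_neg at hall
      have := Finset.card_le_card (fun i hi => hall i hi :
        (range N).filter (fun i => v ≤ f i) ⊆ T)
      omega
    obtain ⟨i, hif, hiT⟩ := hex
    obtain ⟨hiN, hvi⟩ := Finset.mem_filter.1 hif
    have hcard' : (insert i T).card ≤ s + 1 := by
      rw [Finset.card_insert_of_notMem hiT]; omega
    have := serp_le_domSum hf hcard' (T := insert i T)
    rw [Finset.sum_insert hiT] at this
    omega

lemma serp_count_le {f g : ℕ → ℕ} {N : ℕ} (hf : ∀ i, N ≤ i → f i = 0)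
    (hg : ∀ i, N ≤ i → g i = 0) (hdom : DomEq f g) {v : ℕ} (hv : 1 ≤ v) :
    ((range N).filter (fun i => v ≤ f i)).card ≤ ((range N).filter (fun i => v ≤ g i)).card := by
  by_contra h
  push_neg at h
  have h1 := (serp_delta hf hv ((range N).filter (fun i => v ≤ g i)).card).2 h
  rw [hdom, hdom] at h1
  have h2 := (serp_delta hg hv _).1 h1
  omega

lemma serp_count_eq {f g : ℕ → ℕ} {N : ℕ} (hf : ∀ i, N ≤ i → f i = 0)
    (hg : ∀ i, N ≤ i → g i = 0) (hdom : DomEq f g) {v : ℕ} (hv : 1 ≤ v) :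
    ((range N).filter (fun i => v ≤ f i)).card = ((range N).filter (fun i => v ≤ g i)).card :=
  le_antisymm (serp_count_le hf hg hdom hv)
    (serp_count_le hg hf (fun s => (hdom s).symm) hv)

def Sser (n d : ℕ) (lam : ℕ → ℕ) : Finset ℕ :=
  (range n).filter (fun j => lam j < d ∧ ∀ l ∈ range n, j < l → lam j < lam l)

lemma mem_Sser {n d : ℕ} {lam : ℕ → ℕ} {j : ℕ} :
    j ∈ Sser n d lam ↔ j < n ∧ lam j < d ∧ ∀ l, j < l → l < n → lam j < lam l := by
  simp only [Sser, Finset.mem_filter, Finset.mem_range]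
  constructor
  · rintro ⟨h1, h2, h3⟩
    exact ⟨h1, h2, fun l hl hln => h3 l hln hl⟩
  · rintro ⟨h1, h2, h3⟩
    exact ⟨h1, h2, fun l hln hl => h3 l hl hln⟩

noncomputable def muCan (n d : ℕ) (lam : ℕ → ℕ) : ℕ → ℕ := fun j =>
  if j ∈ Sser n d lam then
    (if h : ((Sser n d lam).filter (fun l => j < l)).Nonempty
      then lam (((Sser n d lam).filter (fun l => j < l)).min' h) else d)
  else if j < n then lam j else 0

lemma muCan_of_not_mem {n d : ℕ} {lam : ℕ → ℕ} {j : ℕ} (hj : j ∉ Sser n d lam) (hjn : j < n) :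
    muCan n d lam j = lam j := by
  simp only [muCan, if_neg hj, if_pos hjn]

lemma muCan_of_ge {n d : ℕ} {lam : ℕ → ℕ} {j : ℕ} (hj : n ≤ j) :
    muCan n d lam j = 0 := by
  have h1 : j ∉ Sser n d lam := fun h => by
    have := (mem_Sser.1 h).1; omega
  simp only [muCan, if_neg h1, if_neg (by omega : ¬ j < n)]

lemma muCan_of_next {n d : ℕ} {lam : ℕ → ℕ} {j : ℕ} (hj : j ∈ Sser n d lam)
    (h : ((Sser n d lam).filter (fun l => j < l)).Nonempty) :
    muCan n d lam j = lam (((Sser n d lam).filter (fun l => j < l)).min' h) := by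
  simp only [muCan, if_pos hj, dif_pos h]

lemma muCan_of_last {n d : ℕ} {lam : ℕ → ℕ} {j : ℕ} (hj : j ∈ Sser n d lam)
    (h : ¬ ((Sser n d lam).filter (fun l => j < l)).Nonempty) :
    muCan n d lam j = d := by
  simp only [muCan, if_pos hj, dif_neg h]

lemma serp_argmin {n d : ℕ} {lam : ℕ → ℕ} {j : ℕ}
    (hex : ∃ l, j < l ∧ l < n ∧ lam l < d) :
    ∃ p, p ∈ Sser n d lam ∧ j < p ∧ ∀ l, j < l → l < n → lam p ≤ lam l := by
  obtain ⟨w, hw1, hw2, hw3⟩ := hex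
  have hI : (Finset.Ico (j + 1) n).Nonempty := ⟨w, Finset.mem_Ico.2 ⟨by omega, hw2⟩⟩
  obtain ⟨p0, hp0I, hp0min⟩ := Finset.exists_min_image (Finset.Ico (j + 1) n) lam hI
  set P := (Finset.Ico (j + 1) n).filter (fun x => lam x = lam p0) with hP
  have hPne : P.Nonempty := ⟨p0, Finset.mem_filter.2 ⟨hp0I, rfl⟩⟩
  set p := P.max' hPne with hp
  have hpP : p ∈ P := Finset.max'_mem _ _
  obtain ⟨hpI, hpval⟩ := Finset.mem_filter.1 hpP
  obtain ⟨hpj, hpn⟩ := Finset.mem_Ico.1 hpI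
  have hmin : ∀ l, j < l → l < n → lam p ≤ lam l := by
    intro l hl1 hl2
    rw [hpval]
    exact hp0min l (Finset.mem_Ico.2 ⟨by omega, hl2⟩)
  refine ⟨p, mem_Sser.2 ⟨hpn, ?_, ?_⟩, by omega, hmin⟩
  · calc lam p ≤ lam w := hmin w hw1 hw2
      _ < d := hw3
  · intro l hl1 hl2
    have h1 : lam p ≤ lam l := hmin l (by omega) hl2
    rcases lt_or_eq_of_le h1 with h | h
    · exact h
    · exfalso
      have hlP : l ∈ P := Finset.mem_filter.2 ⟨Finset.mem_Ico.2 ⟨by omega, hl2⟩, by omega⟩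
      have := Finset.le_max' P l hlP
      omega

lemma serp_S_min {n d : ℕ} {lam : ℕ → ℕ} (hd : 1 ≤ d)
    (h0 : ∃ i, i < n ∧ lam i = 0) :
    ∃ i0, i0 ∈ Sser n d lam ∧ lam i0 = 0 ∧ ∀ j ∈ Sser n d lam, i0 ≤ j := by
  obtain ⟨z, hzn, hz0⟩ := h0
  set Z := (range n).filter (fun i => lam i = 0) with hZ
  have hZne : Z.Nonempty := ⟨z, Finset.mem_filter.2 ⟨Finset.mem_range.2 hzn, hz0⟩⟩
  set i0 := Z.max' hZne with hi0
  have hi0Z : i0 ∈ Z := Finset.max'_mem _ _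
  obtain ⟨hi0n, hi00⟩ := Finset.mem_filter.1 hi0Z
  rw [Finset.mem_range] at hi0n
  refine ⟨i0, mem_Sser.2 ⟨hi0n, by omega, ?_⟩, hi00, ?_⟩
  · intro l hl1 hl2
    rw [hi00]
    by_contra h
    push_neg at h
    have hlZ : l ∈ Z := Finset.mem_filter.2 ⟨Finset.mem_range.2 hl2, by omega⟩
    have := Finset.le_max' Z l hlZ
    omega
  · intro j hj
    by_contra h
    push_neg at h
    have := (mem_Sser.1 hj).2.2 i0 h hi0n
    omega

lemma serp_next_min {n d : ℕ} {lam : ℕ → ℕ} {j : ℕ} (hj : j ∈ Sser n d lam)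
    (h : ((Sser n d lam).filter (fun l => j < l)).Nonempty) :
    ∀ l, j < l → l < n →
      lam (((Sser n d lam).filter (fun l => j < l)).min' h) ≤ lam l := by
  set q := ((Sser n d lam).filter (fun l => j < l)).min' h with hq
  have hqF : q ∈ (Sser n d lam).filter (fun l => j < l) := Finset.min'_mem _ _
  obtain ⟨hqS, hqj⟩ := Finset.mem_filter.1 hqF
  obtain ⟨hqn, hqd, _⟩ := mem_Sser.1 hqS
  obtain ⟨p, hpS, hpj, hpmin⟩ := serp_argmin (n := n) (d := d) (lam := lam)
    ⟨q, hqj, hqn, hqd⟩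
  have hqp : q ≤ p := Finset.min'_le _ p (Finset.mem_filter.2 ⟨hpS, hpj⟩)
  rcases lt_or_eq_of_le hqp with hlt | heq
  · exfalso
    have h1 := (mem_Sser.1 hqS).2.2 p hlt (mem_Sser.1 hpS).1
    have h2 := hpmin q hqj hqn
    omega
  · intro l hl1 hl2
    rw [← heq] at hpmin
    exact hpmin l hl1 hl2

lemma serp_last {n d : ℕ} {lam : ℕ → ℕ} {j : ℕ} (hj : j ∈ Sser n d lam)
    (h : ¬ ((Sser n d lam).filter (fun l => j < l)).Nonempty) :
    ∀ l, j < l → l < n → d ≤ lam l := by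
  intro l hl1 hl2
  by_contra hc
  push_neg at hc
  obtain ⟨p, hpS, hpj, _⟩ := serp_argmin (n := n) (d := d) (lam := lam) ⟨l, hl1, hl2, hc⟩
  exact h ⟨p, Finset.mem_filter.2 ⟨hpS, hpj⟩⟩

lemma serp_Sser_lt {n d : ℕ} {lam : ℕ → ℕ} {j : ℕ} (hj : j ∈ Sser n d lam) : j < n :=
  (mem_Sser.1 hj).1

lemma serp_muCan_comp {n d : ℕ} {lam : ℕ → ℕ} (hd : 1 ≤ d)
    (h0 : ∃ i, i < n ∧ lam i = 0) :
    ∃ σ : Equiv.Perm ℕ, (∀ i, muCan n d lam i = appendComp n lam d (σ i)) ∧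
      (∀ i, i ≤ n → σ i ≤ n) ∧ (∀ i, n < i → σ i = i) := by
  set T : Finset ℕ := insert n (Sser n d lam) with hTdef
  have hT : T.Nonempty := ⟨n, Finset.mem_insert_self _ _⟩
  set σ := serpCyc T hT with hσ
  obtain ⟨i0, hi0S, hi00, hi0min⟩ := serp_S_min (n := n) (lam := lam) hd h0
  have hi0n : i0 < n := serp_Sser_lt hi0S
  -- behaviour of σ
  have hmemT : ∀ x, x ∈ T ↔ x = n ∨ x ∈ Sser n d lam := by
    intro x; simp [hTdef]
  have hTle : ∀ x ∈ T, x ≤ n := by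
    intro x hx
    rcases (hmemT x).1 hx with h | h
    · omega
    · have := serp_Sser_lt h; omega
  have hσn : σ n = i0 := by
    have hnT : n ∈ T := Finset.mem_insert_self _ _
    have hempty : ¬ (T.filter (fun y => n < y)).Nonempty := by
      rintro ⟨y, hy⟩
      obtain ⟨hyT, hyn⟩ := Finset.mem_filter.1 hy
      have := hTle y hyT; omega
    rw [hσ, serpCyc_apply_of_max hT hnT hempty]
    apply le_antisymm
    · exact Finset.min'_le T i0 ((hmemT i0).2 (Or.inr hi0S))
    · apply Finset.le_min'
      intro y hy
      rcases (hmemT y).1 hy with h | h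
      · omega
      · exact hi0min y h
  have key : ∀ i, muCan n d lam i = appendComp n lam d (σ i) ∧ (i ≤ n → σ i ≤ n) := by
    intro x
    by_cases hxn : n < x
    · have hxT : x ∉ T := by
        intro hxT; have := hTle x hxT; omega
      rw [hσ, serpCyc_apply_of_not_mem hT hxT]
      constructor
      · rw [muCan_of_ge (by omega), appendComp]
        simp only [if_neg (by omega : ¬ x < n), if_neg (by omega : ¬ x = n)]
      · omega
    · push_neg at hxn
      rcases eq_or_lt_of_le hxn with hxeq | hxlt
      · rw [hxeq]
        constructor
        · rw [muCan_of_ge (le_refl n), hσn, appendComp]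
          simp only [if_pos hi0n, hi00]
        · intro _; rw [hσn]; omega
      · by_cases hxS : x ∈ Sser n d lam
        · have hxT : x ∈ T := (hmemT x).2 (Or.inr hxS)
          have hFne : (T.filter (fun y => x < y)).Nonempty :=
            ⟨n, Finset.mem_filter.2 ⟨Finset.mem_insert_self _ _, hxlt⟩⟩
          have hσx : σ x = (T.filter (fun y => x < y)).min' hFne :=
            serpCyc_apply_of_next hT hxT hFne
          by_cases hFs : ((Sser n d lam).filter (fun l => x < l)).Nonempty
          · set q := ((Sser n d lam).filter (fun l => x < l)).min' hFs with hq
            have hqF : q ∈ (Sser n d lam).filter (fun l => x < l) := Finset.min'_mem _ _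
            obtain ⟨hqS, hqx⟩ := Finset.mem_filter.1 hqF
            have hqn : q < n := serp_Sser_lt hqS
            have hmin : (T.filter (fun y => x < y)).min' hFne = q := by
              apply le_antisymm
              · exact Finset.min'_le _ q
                  (Finset.mem_filter.2 ⟨(hmemT q).2 (Or.inr hqS), hqx⟩)
              · apply Finset.le_min'
                intro y hy
                obtain ⟨hyT, hyx⟩ := Finset.mem_filter.1 hy
                rcases (hmemT y).1 hyT with h | h
                · omega
                · exact Finset.min'_le _ y (Finset.mem_filter.2 ⟨h, hyx⟩)
            constructor
            · rw [muCan_of_next hxS hFs, hσx, hmin, appendComp]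
              simp only [if_pos hqn]
              rfl
            · intro _; rw [hσx, hmin]; omega
          · have hmin : (T.filter (fun y => x < y)).min' hFne = n := by
              apply le_antisymm
              · apply Finset.min'_le
                exact Finset.mem_filter.2 ⟨Finset.mem_insert_self _ _, hxlt⟩
              · apply Finset.le_min'
                intro y hy
                obtain ⟨hyT, hyx⟩ := Finset.mem_filter.1 hy
                rcases (hmemT y).1 hyT with h | h
                · omega
                · exact absurd ⟨y, Finset.mem_filter.2 ⟨h, hyx⟩⟩ hFs
            constructor
            · rw [muCan_of_last hxS hFs, hσx, hmin, appendComp]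
              simp
            · intro _; rw [hσx, hmin]
        · have hxT : x ∉ T := by
            intro hxT
            rcases (hmemT x).1 hxT with h | h
            · omega
            · exact hxS h
          rw [hσ, serpCyc_apply_of_not_mem hT hxT]
          constructor
          · rw [muCan_of_not_mem hxS hxlt, appendComp]
            simp only [if_pos hxlt]
          · omega
  refine ⟨σ, fun i => (key i).1, fun i hi => (key i).2 hi, ?_⟩
  intro i hi
  have hxT : i ∉ T := by
    intro hxT; have := hTle i hxT; omega
  rw [hσ, serpCyc_apply_of_not_mem hT hxT]

lemma serp_muCan_domEq {n d : ℕ} {lam : ℕ → ℕ} (hd : 1 ≤ d)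
    (h0 : ∃ i, i < n ∧ lam i = 0) :
    DomEq (muCan n d lam) (appendComp n lam d) := by
  obtain ⟨σ, hσ1, _, _⟩ := serp_muCan_comp (n := n) (d := d) (lam := lam) hd h0
  have : muCan n d lam = fun i => appendComp n lam d (σ i) := funext hσ1
  intro s
  rw [this]
  exact serp_domSum_comp σ (appendComp n lam d) s

lemma serp_muCan_sum {n d : ℕ} {lam : ℕ → ℕ} (hd : 1 ≤ d)
    (h0 : ∃ i, i < n ∧ lam i = 0) :
    ∑ i ∈ range (n + 1), muCan n d lam i = ∑ i ∈ range (n + 1), appendComp n lam d i := by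
  obtain ⟨σ, hσ1, hσ2, _⟩ := serp_muCan_comp (n := n) (d := d) (lam := lam) hd h0
  have h1 : ∑ i ∈ range (n + 1), muCan n d lam i
      = ∑ i ∈ range (n + 1), appendComp n lam d (σ i) := by
    apply Finset.sum_congr rfl
    intro i _
    exact hσ1 i
  rw [h1]
  have h2 : ∑ i ∈ range (n + 1), appendComp n lam d (σ i)
      = ∑ j ∈ (range (n + 1)).image σ, appendComp n lam d j :=
    (Finset.sum_image (fun a _ b _ h => σ.injective h)).symm
  have h3 : (range (n + 1)).image σ = range (n + 1) := by
    apply Finset.eq_of_subset_of_card_le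
    · intro j hj
      obtain ⟨i, hi, rfl⟩ := Finset.mem_image.1 hj
      rw [Finset.mem_range] at hi
      exact Finset.mem_range.2 (by have := hσ2 i (by omega); omega)
    · rw [Finset.card_image_of_injective _ σ.injective]
  rw [h2, h3]

lemma serp_muCan_isSerp {n d : ℕ} {lam : ℕ → ℕ} (hd : 1 ≤ d)
    (hlam : ∀ i, n ≤ i → lam i = 0) (h0 : ∃ i, i < n ∧ lam i = 0) :
    IsSerpentine n d lam (muCan n d lam) := by
  have hge : ∀ i, lam i ≤ muCan n d lam i := by
    intro i
    by_cases hin : i < n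
    · by_cases hiS : i ∈ Sser n d lam
      · by_cases hF : ((Sser n d lam).filter (fun l => i < l)).Nonempty
        · rw [muCan_of_next hiS hF]
          set q := ((Sser n d lam).filter (fun l => i < l)).min' hF with hq
          have hqF : q ∈ (Sser n d lam).filter (fun l => i < l) := Finset.min'_mem _ _
          obtain ⟨hqS, hqi⟩ := Finset.mem_filter.1 hqF
          have := (mem_Sser.1 hiS).2.2 q hqi (serp_Sser_lt hqS)
          omega
        · rw [muCan_of_last hiS hF]
          have := (mem_Sser.1 hiS).2.1
          omega
      · rw [muCan_of_not_mem hiS hin]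
    · rw [muCan_of_ge (by omega), hlam i (by omega)]
  refine ⟨hlam, fun i hi => muCan_of_ge hi, hge, ?_, ?_, ?_⟩
  · -- sum condition
    have htot := serp_muCan_sum (n := n) (d := d) (lam := lam) hd h0
    have hg : ∑ i ∈ range (n + 1), appendComp n lam d i = (∑ i ∈ range n, lam i) + d := by
      rw [Finset.sum_range_succ]
      congr 1
      · apply Finset.sum_congr rfl
        intro i hi
        rw [Finset.mem_range] at hi
        simp [appendComp, hi]
      · simp [appendComp]
    have hmu : ∑ i ∈ range (n + 1), muCan n d lam i = ∑ i ∈ range n, muCan n d lam i := by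
      rw [Finset.sum_range_succ, muCan_of_ge (le_refl n)]
      omega
    have hsplit : ∑ i ∈ range n, muCan n d lam i
        = ∑ i ∈ range n, ((muCan n d lam i - lam i) + lam i) := by
      apply Finset.sum_congr rfl
      intro i _
      have := hge i
      omega
    rw [Finset.sum_add_distrib] at hsplit
    omega
  · -- condition (iii)
    intro i j hij hjn hlamle
    by_cases hiS : i ∈ Sser n d lam
    · by_cases hF : ((Sser n d lam).filter (fun l => i < l)).Nonempty
      · rw [muCan_of_next hiS hF]
        exact serp_next_min hiS hF j hij hjn
      · rw [muCan_of_last hiS hF]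
        exact serp_last hiS hF j hij hjn
    · rw [muCan_of_not_mem hiS (by omega)]
      exact hlamle
  · -- condition (iv)
    intro i j hij hjn hji hle
    by_cases hiS : i ∈ Sser n d lam
    · exfalso
      have := (mem_Sser.1 hiS).2.2 j hij hjn
      omega
    · exact muCan_of_not_mem hiS (by omega)

lemma serp_appendComp_supp {n d : ℕ} {lam : ℕ → ℕ} :
    ∀ i, n + 1 ≤ i → appendComp n lam d i = 0 := by
  intro i hi
  simp only [appendComp, if_neg (by omega : ¬ i < n), if_neg (by omega : ¬ i = n)]

lemma serp_appendComp_sum {n d : ℕ} {lam : ℕ → ℕ} :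
    ∑ i ∈ range (n + 1), appendComp n lam d i = (∑ i ∈ range n, lam i) + d := by
  rw [Finset.sum_range_succ]
  congr 1
  · apply Finset.sum_congr rfl
    intro i hi
    rw [Finset.mem_range] at hi
    simp [appendComp, hi]
  · simp [appendComp]

lemma serp_forward {n d : ℕ} {lam mu : ℕ → ℕ} (hd : 1 ≤ d)
    (hser : IsSerpentine n d lam mu) (hdom : DomEq mu (appendComp n lam d)) :
    ∃ i, i < n ∧ lam i = 0 := by
  by_contra h
  push_neg at h
  obtain ⟨hlam', hmu0, hge, hsum, _, _⟩ := hser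
  have hmusupp : ∀ i, n + 1 ≤ i → mu i = 0 := fun i hi => hmu0 i (by omega)
  have hgsupp : ∀ i, n + 1 ≤ i → appendComp n lam d i = 0 := serp_appendComp_supp
  have hmu_total : ∑ i ∈ range n, mu i = (∑ i ∈ range n, lam i) + d := by
    have hsplit : ∑ i ∈ range n, mu i = ∑ i ∈ range n, ((mu i - lam i) + lam i) := by
      apply Finset.sum_congr rfl
      intro i _
      have := hge i
      omega
    rw [hsplit, Finset.sum_add_distrib, hsum]
    omega
  have h1 : (∑ i ∈ range n, lam i) + d ≤ domSum mu n := by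
    rw [← hmu_total]
    exact serp_le_domSum hmusupp (by rw [Finset.card_range])
  have h2 : domSum mu n = domSum (appendComp n lam d) n := hdom n
  have h3 : domSum (appendComp n lam d) n ≤ (∑ i ∈ range n, lam i) + d - 1 := by
    apply serp_domSum_le
    intro T hT
    rw [← serp_sum_inter_range hgsupp T]
    set T' := T ∩ range (n + 1) with hT'
    have hT'card : T'.card ≤ n := le_trans (Finset.card_le_card Finset.inter_subset_left) hT
    have hex : ∃ i ∈ range (n + 1), i ∉ T' := by
      by_contra hall
      push_neg at hall
      have := Finset.card_le_card (fun i hi => hall i hi : range (n + 1) ⊆ T')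
      rw [Finset.card_range] at this
      omega
    obtain ⟨istar, histar, histar'⟩ := hex
    rw [Finset.mem_range] at histar
    have hsub : T' ⊆ (range (n + 1)).erase istar := by
      intro x hx
      refine Finset.mem_erase.2 ⟨?_, (Finset.mem_inter.1 hx).2⟩
      rintro rfl
      exact histar' hx
    have hle2 : ∑ i ∈ T', appendComp n lam d i
        ≤ ∑ i ∈ (range (n + 1)).erase istar, appendComp n lam d i :=
      Finset.sum_le_sum_of_subset hsub
    have herase : ∑ i ∈ (range (n + 1)).erase istar, appendComp n lam d i
        + appendComp n lam d istar = ∑ i ∈ range (n + 1), appendComp n lam d i :=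
      Finset.sum_erase_add _ _ (Finset.mem_range.2 (by omega))
    have hpos : 1 ≤ appendComp n lam d istar := by
      by_cases hin : istar < n
      · have := h istar hin
        simp only [appendComp, if_pos hin]
        omega
      · have hieq : istar = n := by omega
        have hval : appendComp n lam d istar = d := by
          simp [appendComp, hieq]
        omega
    have htot := serp_appendComp_sum (n := n) (d := d) (lam := lam)
    omega
  omega

lemma serp_counting {n d : ℕ} {lam mu : ℕ → ℕ} (hd : 1 ≤ d)
    (hmu0 : ∀ i, n ≤ i → mu i = 0) (hge : ∀ i, lam i ≤ mu i)
    (hdom : DomEq mu (appendComp n lam d)) :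
    (∀ v, 1 ≤ v → v ≤ d → ∃ i, (i < n ∧ lam i < v ∧ v ≤ mu i) ∧
        (∀ i', i' < n → lam i' < v → v ≤ mu i' → i' = i)) ∧
    (∀ v, d < v → ∀ i, i < n → v ≤ mu i → v ≤ lam i) := by
  have hmusupp : ∀ i, n + 1 ≤ i → mu i = 0 := fun i hi => hmu0 i (by omega)
  have hgsupp : ∀ i, n + 1 ≤ i → appendComp n lam d i = 0 := serp_appendComp_supp
  have hkey : ∀ v, 1 ≤ v →
      ((range n).filter (fun i => v ≤ mu i)).card
        = ((range n).filter (fun i => v ≤ lam i)).card + (if v ≤ d then 1 else 0) := by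
    intro v hv
    have hcnt := serp_count_eq hmusupp hgsupp hdom hv
    have hB : (range (n + 1)).filter (fun i => v ≤ mu i)
        = (range n).filter (fun i => v ≤ mu i) := by
      ext i
      simp only [Finset.mem_filter, Finset.mem_range]
      constructor
      · rintro ⟨h1, h2⟩
        refine ⟨?_, h2⟩
        by_contra hc
        have : i = n ∨ n < i := by omega
        have h0 : mu i = 0 := hmu0 i (by omega)
        omega
      · rintro ⟨h1, h2⟩
        exact ⟨by omega, h2⟩
    have hA : ((range (n + 1)).filter (fun i => v ≤ appendComp n lam d i)).card
        = ((range n).filter (fun i => v ≤ lam i)).card + (if v ≤ d then 1 else 0) := by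
      by_cases hvd : v ≤ d
      · have heq : (range (n + 1)).filter (fun i => v ≤ appendComp n lam d i)
            = insert n ((range n).filter (fun i => v ≤ lam i)) := by
          ext i
          simp only [Finset.mem_filter, Finset.mem_range, Finset.mem_insert]
          constructor
          · rintro ⟨h1, h2⟩
            by_cases hin : i < n
            · right
              rw [appendComp, if_pos hin] at h2
              exact ⟨hin, h2⟩
            · left; omega
          · rintro (h | ⟨h1, h2⟩)
            · refine ⟨by omega, ?_⟩
              rw [appendComp, if_neg (by omega : ¬ i < n), if_pos h]
              exact hvd
            · refine ⟨by omega, ?_⟩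
              rw [appendComp, if_pos h1]
              exact h2
        rw [heq, Finset.card_insert_of_notMem (by
          intro hmem
          have := (Finset.mem_filter.1 hmem).1
          rw [Finset.mem_range] at this
          omega), if_pos hvd]
      · have heq : (range (n + 1)).filter (fun i => v ≤ appendComp n lam d i)
            = (range n).filter (fun i => v ≤ lam i) := by
          ext i
          simp only [Finset.mem_filter, Finset.mem_range]
          constructor
          · rintro ⟨h1, h2⟩
            by_cases hin : i < n
            · rw [appendComp, if_pos hin] at h2
              exact ⟨hin, h2⟩
            · exfalso
              have hieq : i = n := by omega
              rw [appendComp, if_neg (by omega : ¬ i < n), if_pos hieq] at h2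
              omega
          · rintro ⟨h1, h2⟩
            refine ⟨by omega, ?_⟩
            rw [appendComp, if_pos h1]
            exact h2
        rw [heq, if_neg hvd]
        omega
    rw [hB] at hcnt
    rw [hcnt, hA]
  constructor
  · intro v hv1 hv2
    have hsub : (range n).filter (fun i => v ≤ lam i) ⊆ (range n).filter (fun i => v ≤ mu i) := by
      intro i hi
      obtain ⟨h1, h2⟩ := Finset.mem_filter.1 hi
      exact Finset.mem_filter.2 ⟨h1, le_trans h2 (hge i)⟩
    have hcard := hkey v hv1
    rw [if_pos hv2] at hcard
    have hsd : (((range n).filter (fun i => v ≤ mu i)) \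
        ((range n).filter (fun i => v ≤ lam i))).card = 1 := by
      rw [Finset.card_sdiff_of_subset hsub]
      omega
    obtain ⟨a, ha⟩ := Finset.card_eq_one.1 hsd
    have hamem : a ∈ ((range n).filter (fun i => v ≤ mu i)) \
        ((range n).filter (fun i => v ≤ lam i)) := by
      rw [ha]; exact Finset.mem_singleton_self a
    obtain ⟨ha1, ha2⟩ := Finset.mem_sdiff.1 hamem
    obtain ⟨ha3, ha4⟩ := Finset.mem_filter.1 ha1
    rw [Finset.mem_range] at ha3
    refine ⟨a, ⟨ha3, ?_, ha4⟩, ?_⟩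
    · by_contra hc
      exact ha2 (Finset.mem_filter.2 ⟨Finset.mem_range.2 ha3, by omega⟩)
    · intro i' hi1 hi2 hi3
      have : i' ∈ ((range n).filter (fun i => v ≤ mu i)) \
          ((range n).filter (fun i => v ≤ lam i)) := by
        refine Finset.mem_sdiff.2 ⟨Finset.mem_filter.2 ⟨Finset.mem_range.2 hi1, hi3⟩, ?_⟩
        intro hmem
        have := (Finset.mem_filter.1 hmem).2
        omega
      rw [ha] at this
      exact Finset.mem_singleton.1 this
  · intro v hv i hin hvmu
    have hcard := hkey v (by omega)
    rw [if_neg (by omega)] at hcard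
    have hsub : (range n).filter (fun i => v ≤ lam i) ⊆ (range n).filter (fun i => v ≤ mu i) := by
      intro i hi
      obtain ⟨h1, h2⟩ := Finset.mem_filter.1 hi
      exact Finset.mem_filter.2 ⟨h1, le_trans h2 (hge i)⟩
    have heq := Finset.eq_of_subset_of_card_le hsub (by omega)
    have : i ∈ (range n).filter (fun i => v ≤ lam i) := by
      rw [heq]
      exact Finset.mem_filter.2 ⟨Finset.mem_range.2 hin, hvmu⟩
    exact (Finset.mem_filter.1 this).2

lemma serp_core {n d : ℕ} {lam mu : ℕ → ℕ} (hd : 1 ≤ d)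
    (hser : IsSerpentine n d lam mu) (hdom : DomEq mu (appendComp n lam d)) :
    mu = muCan n d lam := by
  obtain ⟨hlam', hmu0, hge, hsum, hiii, hiv⟩ := hser
  obtain ⟨hC, hc'⟩ := serp_counting hd hmu0 hge hdom
  -- basic facts
  have hDle : ∀ j, j < n → lam j < mu j → mu j ≤ d := by
    intro j hjn hjD
    by_contra hc
    push_neg at hc
    have := hc' (mu j) hc j hjn (le_refl _)
    omega
  have huniq : ∀ x, 1 ≤ x → x ≤ d → ∀ i j, i < n → j < n →
      lam i < x → x ≤ mu i → lam j < x → x ≤ mu j → i = j := by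
    intro x hx1 hx2 i j hin hjn h1 h2 h3 h4
    obtain ⟨c, _, hcu⟩ := hC x hx1 hx2
    rw [hcu i hin h1 h2, hcu j hjn h3 h4]
  have hord : ∀ i j, i < n → j < n → lam i < mu i → lam j < mu j → i ≠ j →
      mu i ≤ lam j ∨ mu j ≤ lam i := by
    intro i j hin hjn hiD hjD hne
    by_contra hcon
    push_neg at hcon
    obtain ⟨hc1, hc2⟩ := hcon
    set x := min (mu i) (mu j) with hx
    have hx1 : 1 ≤ x := by omega
    have hx2 : x ≤ d := by
      have := hDle i hin hiD
      omega
    exact hne (huniq x hx1 hx2 i j hin hjn (by omega) (by omega) (by omega) (by omega))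
  have hF3 : ∀ j, j < n → lam j < mu j → 1 ≤ lam j →
      ∃ p, p < n ∧ lam p < mu p ∧ mu p = lam j ∧ p < j := by
    intro j hjn hjD hj1
    have hjd : mu j ≤ d := hDle j hjn hjD
    obtain ⟨c, ⟨hcn, hclam, hcmu⟩, _⟩ := hC (lam j) hj1 (by omega)
    have hcD : lam c < mu c := by omega
    have hcval : mu c = lam j := by
      by_contra hcc
      have hgt : lam j + 1 ≤ mu c := by omega
      have hcj : c = j := huniq (lam j + 1) (by omega) (by omega) c j hcn hjn
        (by omega) hgt (by omega) (by omega)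
      rw [hcj] at hclam
      omega
    refine ⟨c, hcn, hcD, hcval, ?_⟩
    have hcnej : c ≠ j := by
      intro hh
      rw [hh] at hcval
      omega
    rcases lt_or_gt_of_ne hcnej with h | h
    · exact h
    · exfalso
      have := hiv j c h hcn (by omega) (by omega)
      omega
  have hR : ∀ a, ∀ i j, i < n → j < n → lam i < mu i → lam j < mu j →
      mu i ≤ lam j → lam j = a → i < j := by
    intro a
    induction a using Nat.strong_induction_on with
    | _ a ih =>
      intro i j hin hjn hiD hjD hle hja
      have hj1 : 1 ≤ lam j := by omega
      obtain ⟨p, hpn, hpD, hpval, hpj⟩ := hF3 j hjn hjD hj1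
      rcases eq_or_lt_of_le hle with heq | hlt
      · -- mu i = lam j, so i = p
        have hip : i = p := by
          have hx2 : lam j ≤ d := by
            have := hDle j hjn hjD
            omega
          exact huniq (lam j) hj1 hx2 i p hin hpn (by omega) (by omega)
            (by omega) (by omega)
        omega
      · have hnep : i ≠ p := by
          intro hh
          rw [hh] at hlt
          omega
        have hd2 := hord i p hin hpn hiD hpD hnep
        have hle2 : mu i ≤ lam p := by
          rcases hd2 with h | h
          · exact h
          · omega
        have := ih (lam p) (by omega) i p hin hpn hiD hpD hle2 rfl
        omega
  have hCC : ∀ a, ∀ j l, j < l → l < n → lam j < mu j → lam l < lam j →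
      lam l = a → False := by
    intro a
    induction a using Nat.strong_induction_on with
    | _ a ih =>
      intro j l hjl hln hjD hll hla
      have hjn : j < n := by omega
      have hx2 : lam l + 1 ≤ d := by
        have := hDle j hjn hjD
        omega
      obtain ⟨c, ⟨hcn, hclam, hcmu⟩, _⟩ := hC (lam l + 1) (by omega) hx2
      have hclaml : lam c ≤ lam l := by omega
      rcases lt_trichotomy c l with h | h | h
      · have := hiii c l h hln (by omega)
        omega
      · -- c = l : l is in D
        have hlD : lam l < mu l := by
          rw [h] at hclam hcmu
          omega
        have hd2 := hord j l hjn hln hjD hlD (by omega)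
        rcases hd2 with hh | hh
        · omega
        · have := hR (lam j) l j hln hjn hlD hjD hh rfl
          omega
      · -- l < c
        rcases lt_or_eq_of_le hclaml with hlt | heqq
        · exact ih (lam c) (by omega) j c (by omega) hcn hjD (by omega) rfl
        · -- lam c = lam l, c in D
          have hcD : lam c < mu c := by omega
          have hd2 := hord j c hjn hcn hjD hcD (by omega)
          rcases hd2 with hh | hh
          · omega
          · have := hR (lam j) c j hcn hjn hcD hjD hh rfl
            omega
  -- D ⊆ S
  have hDS : ∀ j, j < n → lam j < mu j → j ∈ Sser n d lam := by
    intro j hjn hjD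
    have hjd : mu j ≤ d := hDle j hjn hjD
    refine mem_Sser.2 ⟨hjn, by omega, ?_⟩
    intro l hl1 hl2
    by_contra hc
    push_neg at hc
    rcases lt_or_eq_of_le hc with h | h
    · exact hCC (lam l) j l hl1 hl2 hjD h rfl
    · have := hiii j l hl1 hl2 (by omega)
      omega
  -- S ⊆ D
  have hSD : ∀ j, j ∈ Sser n d lam → lam j < mu j := by
    intro j hjS
    obtain ⟨hjn, hjd, hjmin⟩ := mem_Sser.1 hjS
    by_contra hc
    push_neg at hc
    have hjeq : mu j = lam j := le_antisymm hc (hge j)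
    obtain ⟨c, ⟨hcn, hclam, hcmu⟩, _⟩ := hC (lam j + 1) (by omega) (by omega)
    have hcnej : c ≠ j := by
      intro hh
      rw [hh] at hcmu
      omega
    rcases lt_or_gt_of_ne hcnej with h | h
    · have := hiii c j h hjn (by omega)
      omega
    · have := hjmin c h hcn
      omega
  -- final pointwise identification
  funext i
  by_cases hin : i < n
  · by_cases hiD : lam i < mu i
    · have hiS : i ∈ Sser n d lam := hDS i hin hiD
      have hid : mu i ≤ d := hDle i hin hiD
      rcases eq_or_lt_of_le hid with heq | hlt
      · -- mu i = d : last element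
        have hempty : ¬ ((Sser n d lam).filter (fun l => i < l)).Nonempty := by
          rintro ⟨j', hj'⟩
          obtain ⟨hj'S, hj'i⟩ := Finset.mem_filter.1 hj'
          have hj'n := serp_Sser_lt hj'S
          have hj'D := hSD j' hj'S
          have hj'd := (mem_Sser.1 hj'S).2.1
          rcases hord i j' hin hj'n hiD hj'D (by omega) with h | h
          · omega
          · have := hR (lam i) j' i hj'n hin hj'D hiD h rfl
            omega
        rw [muCan_of_last hiS hempty]
        omega
      · -- mu i < d : next element
        obtain ⟨c, ⟨hcn, hclam, hcmu⟩, _⟩ := hC (mu i + 1) (by omega) (by omega)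
        have hcD : lam c < mu c := by omega
        have hcnei : c ≠ i := by
          intro hh
          rw [hh] at hcmu
          omega
        have hcval : lam c = mu i := by
          rcases lt_or_eq_of_le (by omega : lam c ≤ mu i) with hh | hh
          · exfalso
            have := huniq (mu i) (by omega) (by omega) i c hin hcn
              (by omega) (by omega) (by omega) (by omega)
            omega
          · omega
        have hic : i < c := hR (lam c) i c hin hcn hiD hcD (by omega) rfl
        have hcS : c ∈ Sser n d lam := hDS c hcn hcD
        have hne : ((Sser n d lam).filter (fun l => i < l)).Nonempty :=
          ⟨c, Finset.mem_filter.2 ⟨hcS, hic⟩⟩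
        have hq := Finset.min'_mem ((Sser n d lam).filter (fun l => i < l)) hne
        set q := ((Sser n d lam).filter (fun l => i < l)).min' hne with hqdef
        obtain ⟨hqS, hiq⟩ := Finset.mem_filter.1 hq
        have hqn := serp_Sser_lt hqS
        have hqD := hSD q hqS
        have hqc : q ≤ c := Finset.min'_le _ c (Finset.mem_filter.2 ⟨hcS, hic⟩)
        have hcq : c ≤ q := by
          rcases hord i q hin hqn hiD hqD (by omega) with h | h
          · by_contra hcon
            push_neg at hcon
            have := (mem_Sser.1 hqS).2.2 c hcon hcn
            omega
          · exfalso
            have := hR (lam i) q i hqn hin hqD hiD h rfl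
            omega
        have hqceq : q = c := by omega
        rw [muCan_of_next hiS hne, ← hqdef, hqceq]
        omega
    · have hieq : mu i = lam i := le_antisymm (by omega) (hge i)
      have hiS : i ∉ Sser n d lam := by
        intro hiS
        exact hiD (hSD i hiS)
      rw [muCan_of_not_mem hiS hin, hieq]
  · rw [muCan_of_ge (by omega), hmu0 i (by omega)]

/-- Lemma 1.8.  There exists a serpentine `μ ∈ Ser^n_{d,λ}` with
`μ₊ = (λ,d)₊` if and only if some entry of `λ` vanishes; moreover such a `μ`,
when it exists, is unique. -/
theorem serpentine_with_equal_dominant_part_iff (n d : ℕ) (hd : 1 ≤ d)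
    (lam : ℕ → ℕ) (hlam : ∀ i, n ≤ i → lam i = 0) :
    ((∃ mu, IsSerpentine n d lam mu ∧ DomEq mu (appendComp n lam d)) ↔
      ∃ i, i < n ∧ lam i = 0) ∧
    (∀ mu mu',
      IsSerpentine n d lam mu → DomEq mu (appendComp n lam d) →
      IsSerpentine n d lam mu' → DomEq mu' (appendComp n lam d) →
      mu = mu') := by
  constructor
  · constructor
    · rintro ⟨mu, hser, hdomq⟩
      exact serp_forward hd hser hdomq
    · intro h0
      exact ⟨muCan n d lam, serp_muCan_isSerp hd hlam h0, serp_muCan_domEq hd h0⟩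
  · intro mu mu' h1 h2 h3 h4
    rw [serp_core hd h1 h2, serp_core hd h3 h4]
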